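/- Let v_K, c_1, c_2, c_3, v_1 > 0. There exist v_2, v_3 > 0 satisfying both c_2·v_3^2 + c_3·v_2^2 = v_K·(c_2·v_3 + c_3·v_2) and c_2/v_2 + c_3/v_3 ≤ c_1/v_1 if and only if 2·√(c_2·c_3) ≤ v_K·(c_1/v_1). -/

import Mathlib

/-- For `v_K, c₁, c₂, c₃, v₁ > 0`, there exist reported valuations
`v₂, v₃ > 0` satisfying both the feasibility condition
`c₂·v₃² + c₃·v₂² = v_K·(c₂·v₃ + c₃·v₂)` and the abstention condition
`c₂/v₂ + c₃/v₃ ≤ c₁/v₁` if and only if `2·√(c₂·c₃) ≤ v_K·(c₁/v₁)`. -/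
theorem tullock_coordinator_exclusion_iff (vK c₁ c₂ c₃ v₁ : ℝ)
    (hvK : 0 < vK) (hc₁ : 0 < c₁) (hc₂ : 0 < c₂) (hc₃ : 0 < c₃)
    (hv₁ : 0 < v₁) :
    (∃ v₂ v₃ : ℝ, 0 < v₂ ∧ 0 < v₃ ∧
        c₂ * v₃ ^ 2 + c₃ * v₂ ^ 2 = vK * (c₂ * v₃ + c₃ * v₂) ∧
        c₂ / v₂ + c₃ / v₃ ≤ c₁ / v₁) ↔
      2 * Real.sqrt (c₂ * c₃) ≤ vK * (c₁ / v₁) := by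
  set s := Real.sqrt (c₂ * c₃) with hsdef
  have hs : 0 < s := Real.sqrt_pos.mpr (mul_pos hc₂ hc₃)
  have hs2 : s ^ 2 = c₂ * c₃ := Real.sq_sqrt (mul_pos hc₂ hc₃).le
  constructor
  · rintro ⟨x, y, hx, hy, hfeas, hle⟩
    have hxy : 0 < x * y := mul_pos hx hy
    have key : 2 * s * (x * y) ≤ c₂ * y ^ 2 + c₃ * x ^ 2 := by
      nlinarith [sq_nonneg (Real.sqrt c₂ * y - Real.sqrt c₃ * x),
        Real.sq_sqrt hc₂.le, Real.sq_sqrt hc₃.le,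
        (Real.sqrt_mul hc₂.le c₃).symm]
    have step1 : 2 * s ≤ vK * (c₂ / x + c₃ / y) := by
      have e : c₂ / x + c₃ / y = (c₂ * y + c₃ * x) / (x * y) := by
        field_simp
      rw [e, ← mul_div_assoc, le_div_iff₀ hxy]
      nlinarith [key, hfeas]
    calc 2 * s ≤ vK * (c₂ / x + c₃ / y) := step1
      _ ≤ vK * (c₁ / v₁) := mul_le_mul_of_nonneg_left hle hvK.le
  · intro h
    refine ⟨vK * (s + c₂) / (2 * s), vK * (s + c₃) / (2 * s), ?_, ?_, ?_, ?_⟩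
    · positivity
    · positivity
    · have hne : s ≠ 0 := hs.ne'
      field_simp
      linear_combination (-(c₂ + c₃)) * hs2
    · have e : c₂ / (vK * (s + c₂) / (2 * s)) + c₃ / (vK * (s + c₃) / (2 * s))
          = 2 * s / vK := by
        have h2 : s + c₂ ≠ 0 := by positivity
        have h3 : s + c₃ ≠ 0 := by positivity
        field_simp
        linear_combination (-1) * hs2
      rw [e, div_le_iff₀ hvK]
      nlinarith [h]
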